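/- In the operator dynamical system dU_i/dt = (s I_m − m∑_j U_j U_j^T) U_i + U_i (s I_n − n∑_j U_j^T U_j), the size s(t) = tr(∑_i U_i U_i^T) satisfies ds/dt = −2Δ, where Δ = (1/m)tr[(s I_m − m∑_i U_i U_i^T)²] + (1/n)tr[(s I_n − n∑_i U_i^T U_i)²]. In particular, the size is non-increasing over time. -/

import Mathlib

open Matrix BigOperators

/-- In the operator dynamical system `dUᵢ/dt = Cₘ Uᵢ + Uᵢ Cₙ`, the size satisfies
`ds/dt = -2Δ`; in particular the size is non-increasing over time. -/
theorem opSize_deriv {k m n : ℕ} (hm : 0 < m) (hn : 0 < n)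
    (U : ℝ → Fin k → Matrix (Fin m) (Fin n) ℝ)
    (s Δ : ℝ → ℝ)
    (Cm : ℝ → Matrix (Fin m) (Fin m) ℝ) (Cn : ℝ → Matrix (Fin n) (Fin n) ℝ)
    (hs : ∀ t, s t = (∑ i, U t i * (U t i)ᵀ).trace)
    (hCm : ∀ t, Cm t = s t • (1 : Matrix (Fin m) (Fin m) ℝ) - (m : ℝ) • ∑ i, U t i * (U t i)ᵀ)
    (hCn : ∀ t, Cn t = s t • (1 : Matrix (Fin n) (Fin n) ℝ) - (n : ℝ) • ∑ i, (U t i)ᵀ * U t i)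
    (hΔ : ∀ t, Δ t = (1 / (m : ℝ)) * ((Cm t ^ 2).trace) + (1 / (n : ℝ)) * ((Cn t ^ 2).trace))
    (hode : ∀ t i a b,
      HasDerivAt (fun τ => U τ i a b) ((Cm t * U t i + U t i * Cn t) a b) t) :
    (∀ t, HasDerivAt s (-2 * Δ t) t) ∧ Antitone s := by
  have hm' : (m : ℝ) ≠ 0 := Nat.cast_ne_zero.mpr hm.ne'
  have hn' : (n : ℝ) ≠ 0 := Nat.cast_ne_zero.mpr hn.ne'
  -- trace of Bn equals s
  have trBn : ∀ t, (∑ i, (U t i)ᵀ * U t i).trace = s t := by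
    intro t
    rw [hs t, Matrix.trace_sum, Matrix.trace_sum]
    exact Finset.sum_congr rfl fun i _ => Matrix.trace_mul_comm _ _
  have trBm : ∀ t, (∑ i, U t i * (U t i)ᵀ).trace = s t := fun t => (hs t).symm
  -- trace of Cm, Cn is zero
  have trCm : ∀ t, (Cm t).trace = 0 := by
    intro t
    rw [hCm t, Matrix.trace_sub, Matrix.trace_smul, Matrix.trace_smul, Matrix.trace_one,
      trBm t]
    simp [mul_comm]
  have trCn : ∀ t, (Cn t).trace = 0 := by
    intro t
    rw [hCn t, Matrix.trace_sub, Matrix.trace_smul, Matrix.trace_smul, Matrix.trace_one,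
      trBn t]
    simp [mul_comm]
  -- key trace identities
  have e1 : ∀ t, (Cm t * ∑ i, U t i * (U t i)ᵀ).trace = -(1 / (m : ℝ)) * (Cm t ^ 2).trace := by
    intro t
    have h2 : Cm t ^ 2 = s t • Cm t - (m : ℝ) • (Cm t * ∑ i, U t i * (U t i)ᵀ) := by
      rw [pow_two]
      nth_rewrite 2 [hCm t]
      rw [Matrix.mul_sub, Matrix.mul_smul, Matrix.mul_one, Matrix.mul_smul]
    rw [h2, Matrix.trace_sub, Matrix.trace_smul, Matrix.trace_smul, trCm t]
    field_simp
    simp only [smul_zero, smul_eq_mul]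
    ring
  have e2 : ∀ t, (Cn t * ∑ i, (U t i)ᵀ * U t i).trace = -(1 / (n : ℝ)) * (Cn t ^ 2).trace := by
    intro t
    have h2 : Cn t ^ 2 = s t • Cn t - (n : ℝ) • (Cn t * ∑ i, (U t i)ᵀ * U t i) := by
      rw [pow_two]
      nth_rewrite 2 [hCn t]
      rw [Matrix.mul_sub, Matrix.mul_smul, Matrix.mul_one, Matrix.mul_smul]
    rw [h2, Matrix.trace_sub, Matrix.trace_smul, Matrix.trace_smul, trCn t]
    field_simp
    simp only [smul_zero, smul_eq_mul]
    ring
  -- the derivative statement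
  have hderiv : ∀ t, HasDerivAt s (-2 * Δ t) t := by
    intro t
    have hsum : s = fun τ => ∑ i, ∑ a, ∑ b, U τ i a b * U τ i a b := by
      funext τ
      rw [hs τ, Matrix.trace_sum]
      refine Finset.sum_congr rfl fun i _ => ?_
      simp [Matrix.trace, Matrix.diag, Matrix.mul_apply]
    have hD : HasDerivAt (fun τ => ∑ i, ∑ a, ∑ b, U τ i a b * U τ i a b)
        (∑ i, ∑ a, ∑ b, ((Cm t * U t i + U t i * Cn t) a b * U t i a b +
          U t i a b * (Cm t * U t i + U t i * Cn t) a b)) t := by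
      refine HasDerivAt.fun_sum fun i _ => HasDerivAt.fun_sum fun a _ => HasDerivAt.fun_sum fun b _ => ?_
      exact (hode t i a b).mul (hode t i a b)
    have l1 : ∀ (X : Matrix (Fin m) (Fin n) ℝ),
        (∑ a, ∑ b, (Cm t * X) a b * X a b) = (Cm t * (X * Xᵀ)).trace := by
      intro X
      rw [← Matrix.mul_assoc]
      simp only [Matrix.trace, Matrix.diag_apply, Matrix.mul_apply, Matrix.transpose_apply]
    have l2 : ∀ (X : Matrix (Fin m) (Fin n) ℝ),
        (∑ a, ∑ b, (X * Cn t) a b * X a b) = (Cn t * (Xᵀ * X)).trace := by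
      intro X
      rw [Matrix.trace_mul_comm, Matrix.mul_assoc]
      simp only [Matrix.trace, Matrix.diag_apply, Matrix.mul_apply, Matrix.transpose_apply]
      conv_rhs => rw [Finset.sum_comm]
      exact Finset.sum_congr rfl fun a _ => Finset.sum_congr rfl fun b _ => by ring
    have hval : (∑ i, ∑ a, ∑ b, ((Cm t * U t i + U t i * Cn t) a b * U t i a b +
          U t i a b * (Cm t * U t i + U t i * Cn t) a b)) = -2 * Δ t := by
      have step : ∀ i, (∑ a, ∑ b, ((Cm t * U t i + U t i * Cn t) a b * U t i a b +
            U t i a b * (Cm t * U t i + U t i * Cn t) a b)) =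
          2 * ((Cm t * (U t i * (U t i)ᵀ)).trace + (Cn t * ((U t i)ᵀ * U t i)).trace) := by
        intro i
        have : (∑ a, ∑ b, ((Cm t * U t i + U t i * Cn t) a b * U t i a b +
            U t i a b * (Cm t * U t i + U t i * Cn t) a b)) =
            2 * ((∑ a, ∑ b, (Cm t * U t i) a b * U t i a b) +
              (∑ a, ∑ b, (U t i * Cn t) a b * U t i a b)) := by
          simp only [Matrix.add_apply, Finset.mul_sum, ← Finset.sum_add_distrib]
          exact Finset.sum_congr rfl fun a _ => Finset.sum_congr rfl fun b _ => by ring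
        rw [this, l1 (U t i), l2 (U t i)]
      rw [Finset.sum_congr rfl fun i _ => step i, ← Finset.mul_sum, Finset.sum_add_distrib,
        ← Matrix.trace_sum, ← Matrix.trace_sum, ← Finset.mul_sum, ← Finset.mul_sum]
      rw [Matrix.trace_mul_comm, Matrix.trace_mul_comm, e1 t, e2 t, hΔ t]
      ring
    rw [hsum]
    exact hval ▸ hD
  refine ⟨hderiv, ?_⟩
  -- nonnegativity of Δ
  have sqnn : ∀ {p : ℕ} (A : Matrix (Fin p) (Fin p) ℝ), Aᵀ = A → 0 ≤ (A ^ 2).trace := by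
    intro p A h
    rw [pow_two]
    have h2 : (A * A).trace = ∑ a, ∑ b, A a b * A a b := by
      simp only [Matrix.trace, Matrix.diag_apply, Matrix.mul_apply]
      refine Finset.sum_congr rfl fun a _ => Finset.sum_congr rfl fun b _ => ?_
      calc A a b * A b a = A a b * Aᵀ a b := by rw [Matrix.transpose_apply]
        _ = A a b * A a b := by rw [h]
    rw [h2]
    exact Finset.sum_nonneg fun a _ => Finset.sum_nonneg fun b _ => mul_self_nonneg _
  have hCmsym : ∀ t, (Cm t)ᵀ = Cm t := by
    intro t
    rw [hCm t]
    simp [Matrix.transpose_sub, Matrix.transpose_smul, Matrix.transpose_sum,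
      Matrix.transpose_mul, Matrix.transpose_transpose, Matrix.transpose_one]
  have hCnsym : ∀ t, (Cn t)ᵀ = Cn t := by
    intro t
    rw [hCn t]
    simp [Matrix.transpose_sub, Matrix.transpose_smul, Matrix.transpose_sum,
      Matrix.transpose_mul, Matrix.transpose_transpose, Matrix.transpose_one]
  have hΔnn : ∀ t, 0 ≤ Δ t := by
    intro t
    rw [hΔ t]
    have h1 := sqnn (Cm t) (hCmsym t)
    have h2 := sqnn (Cn t) (hCnsym t)
    have : (0:ℝ) ≤ 1 / (m:ℝ) := by positivity
    have : (0:ℝ) ≤ 1 / (n:ℝ) := by positivity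
    positivity
  have hdiff : Differentiable ℝ s := fun t => (hderiv t).differentiableAt
  refine antitone_of_deriv_nonpos hdiff fun t => ?_
  rw [(hderiv t).deriv]
  nlinarith [hΔnn t]
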